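/- For every nonempty permutation class C, the basis of the substitution closure ⟨C⟩ consists precisely of the containment-minimal simple permutations not belonging to C. -/

import Mathlib

open scoped BigOperators

/-- A permutation of length `n`, in the combinatorial sense. -/
abbrev PermOf (n : ℕ) : Type := Equiv.Perm (Fin n)

/-- Pattern containment between permutations of possibly different lengths. -/
def PattContains {k n : ℕ} (σ : PermOf k) (π : PermOf n) : Prop :=
  ∃ f : Fin k ↪o Fin n, ∀ s t : Fin k, σ s < σ t ↔ π (f s) < π (f t)

/-- A permutation of arbitrary finite length. -/
abbrev Permutation : Type := Σ n : ℕ, PermOf n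

/-- The containment order on permutations. -/
def PermLe (σ π : Permutation) : Prop := PattContains σ.2 π.2

/-- A permutation class: a set of permutations closed downwards under containment. -/
def IsPermClass (C : Set Permutation) : Prop :=
  ∀ σ π : Permutation, PermLe σ π → π ∈ C → σ ∈ C

/-- The generating function of a set of permutations. -/
noncomputable def gfOf (C : Set Permutation) : PowerSeries ℚ :=
  PowerSeries.mk fun n => ({π : PermOf n | (⟨n, π⟩ : Permutation) ∈ C}.ncard : ℚ)

/-- A formal power series is rational if it satisfies `q * f = p` for polynomials `p, q`, `q ≠ 0`. -/
def IsRationalPS (f : PowerSeries ℚ) : Prop :=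
  ∃ p q : Polynomial ℚ, q ≠ 0 ∧
    (Polynomial.coeToPowerSeries.ringHom q) * f = Polynomial.coeToPowerSeries.ringHom p

/-- A formal power series is algebraic if `P(x, f) = 0` for a nonzero polynomial `P` in two
variables over `ℚ` (viewed as a polynomial in the second variable with polynomial coefficients). -/
def IsAlgebraicPS (f : PowerSeries ℚ) : Prop :=
  ∃ P : Polynomial (Polynomial ℚ), P ≠ 0 ∧
    Polynomial.eval₂ Polynomial.coeToPowerSeries.ringHom f P = 0

/-- A set of permutations is partially well-ordered if it contains no infinite antichain. -/
def IsPwoClass (C : Set Permutation) : Prop :=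
  ∀ A : Set Permutation, A ⊆ C →
    (∀ x ∈ A, ∀ y ∈ A, x ≠ y → ¬ PermLe x y) → A.Finite

/-- The basis of a class: the minimal permutations not in it. -/
def basisOf (C : Set Permutation) : Set Permutation :=
  {π | π ∉ C ∧ ∀ σ, PermLe σ π → σ ≠ π → σ ∈ C}

def FinitelyBased (C : Set Permutation) : Prop := (basisOf C).Finite

/-- The order-preserving equivalence between a lexicographic sigma of `Fin`s and `Fin` of the sum,
sending `⟨i, j⟩` to `n 0 + ⋯ + n (i-1) + j`. -/
def sigmaFinFstEquiv {m : ℕ} (β : Fin (m + 1) → Type*) :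
    (Σ i : Fin (m + 1), β i) ≃ (β 0 ⊕ Σ i : Fin m, β i.succ) where
  toFun x := Fin.cases (motive := fun i => β i → β 0 ⊕ Σ i : Fin m, β i.succ)
    Sum.inl (fun i j => Sum.inr ⟨i, j⟩) x.1 x.2
  invFun s := Sum.elim (fun j => ⟨0, j⟩) (fun p => ⟨p.1.succ, p.2⟩) s
  left_inv := by
    rintro ⟨i, j⟩
    induction i using Fin.cases <;> simp
  right_inv := by
    rintro (j | ⟨i, j⟩) <;> simp

def sigmaFinEquiv : ∀ {m : ℕ} {n : Fin m → ℕ}, (Σ i : Fin m, Fin (n i)) ≃ Fin (∑ i, n i)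
  | 0, n =>
    { toFun := fun x => x.1.elim0
      invFun := fun p => (Fin.cast (by simp) p : Fin 0).elim0
      left_inv := fun x => x.1.elim0
      right_inv := fun p => (Fin.cast (by simp) p : Fin 0).elim0 }
  | m + 1, n =>
    (sigmaFinFstEquiv fun i => Fin (n i)).trans <|
      ((Equiv.refl (Fin (n 0))).sumCongr sigmaFinEquiv).trans <|
        finSumFinEquiv.trans (finCongr (Fin.sum_univ_succ n).symm)

/-- The inflation `σ[α 0, …, α (m-1)]` of `σ` by the permutations `α i`. -/
noncomputable def inflation {m : ℕ} (σ : PermOf m) {n : Fin m → ℕ}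
    (α : ∀ i, PermOf (n i)) : PermOf (∑ i, n i) :=
  sigmaFinEquiv.symm.trans <|
    (Equiv.sigmaCongrRight fun i =>
        (α i).trans (finCongr (congrArg n (σ.symm_apply_apply i).symm))).trans <|
      (Equiv.sigmaCongrLeft (β := fun v : Fin m => Fin (n (σ.symm v))) σ).trans <|
        sigmaFinEquiv.trans (finCongr (Equiv.sum_comp σ.symm n))

/-- The direct sum `x ⊕ y` of two permutations. -/
def dsum {a b : ℕ} (x : PermOf a) (y : PermOf b) : PermOf (a + b) :=
  finSumFinEquiv.symm.trans ((Equiv.sumCongr x y).trans finSumFinEquiv)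

/-- The skew sum `x ⊖ y` of two permutations. -/
def ssum {a b : ℕ} (x : PermOf a) (y : PermOf b) : PermOf (a + b) :=
  finSumFinEquiv.symm.trans <| (Equiv.sumCongr x y).trans <|
    (Equiv.sumComm (Fin a) (Fin b)).trans <| finSumFinEquiv.trans (finCongr (Nat.add_comm b a))

def onePerm : Permutation := ⟨1, Equiv.refl _⟩

def perm12 : PermOf 2 := Equiv.refl _

def perm21 : PermOf 2 := Equiv.swap 0 1

/-- Sums and skew sums at the level of `Permutation`. -/
def psum (x y : Permutation) : Permutation := ⟨x.1 + y.1, dsum x.2 y.2⟩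

def pskew (x y : Permutation) : Permutation := ⟨x.1 + y.1, ssum x.2 y.2⟩

/-- Two permutations (of possibly different declared lengths) are the same pattern. -/
def SamePatt {a b : ℕ} (x : PermOf a) (y : PermOf b) : Prop :=
  PattContains x y ∧ PattContains y x

/-- The pattern (subpermutation) of `π` on a set `s` of positions. -/
noncomputable def pattOn {N : ℕ} (π : PermOf N) (s : Finset (Fin N)) : PermOf s.card :=
  (Tuple.sort fun p : Fin s.card => π ((s.orderIsoOfFin rfl p : Fin N))).symm

def SumDecomposable (π : Permutation) : Prop :=
  ∃ x y : Permutation, 0 < x.1 ∧ 0 < y.1 ∧ π = psum x y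

def SkewDecomposable (π : Permutation) : Prop :=
  ∃ x y : Permutation, 0 < x.1 ∧ 0 < y.1 ∧ π = pskew x y

/-- The property (set) of sum decomposable permutations. -/
def DSumSet : Set Permutation := {π | SumDecomposable π}

/-- The property (set) of skew decomposable permutations. -/
def DSkewSet : Set Permutation := {π | SkewDecomposable π}

/-- `t` is a sum splitting point of `x`: positions `≥ t` carry exactly the values `≥ t`. -/
def SumSplitAt {a : ℕ} (x : PermOf a) (t : ℕ) : Prop :=
  ∀ p : Fin a, t ≤ (p : ℕ) ↔ t ≤ (x p : ℕ)

/-- `t` is a skew splitting point of `x`: positions `< t` carry exactly the values `≥ a - t`. -/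
def SkewSplitAt {a : ℕ} (x : PermOf a) (t : ℕ) : Prop :=
  ∀ p : Fin a, (p : ℕ) < t ↔ a - t ≤ (x p : ℕ)

/-- `γ` is a sum-suffix of `x`. -/
def IsSumSuffixOf {b a : ℕ} (γ : PermOf b) (x : PermOf a) : Prop :=
  ∃ t, SumSplitAt x t ∧ SamePatt γ (pattOn x (Finset.univ.filter fun p => t ≤ (p : ℕ)))

def IsSumPrefixOf {b a : ℕ} (γ : PermOf b) (x : PermOf a) : Prop :=
  ∃ t, SumSplitAt x t ∧ SamePatt γ (pattOn x (Finset.univ.filter fun p => (p : ℕ) < t))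

def IsSkewSuffixOf {b a : ℕ} (γ : PermOf b) (x : PermOf a) : Prop :=
  ∃ t, SkewSplitAt x t ∧ SamePatt γ (pattOn x (Finset.univ.filter fun p => t ≤ (p : ℕ)))

def IsSkewPrefixOf {b a : ℕ} (γ : PermOf b) (x : PermOf a) : Prop :=
  ∃ t, SkewSplitAt x t ∧ SamePatt γ (pattOn x (Finset.univ.filter fun p => (p : ℕ) < t))

/-- Length of the first sum component. -/
noncomputable def fscLen {a : ℕ} (x : PermOf a) : ℕ := sInf {t | 1 ≤ t ∧ SumSplitAt x t}

noncomputable def firstSumComp {a : ℕ} (x : PermOf a) : Permutation :=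
  ⟨_, pattOn x (Finset.univ.filter fun p => (p : ℕ) < fscLen x)⟩

noncomputable def fskLen {a : ℕ} (x : PermOf a) : ℕ := sInf {t | 1 ≤ t ∧ SkewSplitAt x t}

noncomputable def firstSkewComp {a : ℕ} (x : PermOf a) : Permutation :=
  ⟨_, pattOn x (Finset.univ.filter fun p => (p : ℕ) < fskLen x)⟩

open Classical in
/-- The first component of a permutation. -/
noncomputable def firstComp (π : Permutation) : Permutation :=
  if π ∈ DSumSet then firstSumComp π.2
  else if π ∈ DSkewSet then firstSkewComp π.2
  else π

/-- The inflation `C[U]` of one set of permutations by another. -/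
def classInflate (C U : Set Permutation) : Set Permutation :=
  {π | ∃ (m : ℕ) (σ : PermOf m) (n : Fin m → ℕ) (α : ∀ i, PermOf (n i)),
      (⟨m, σ⟩ : Permutation) ∈ C ∧ (∀ i, 0 < n i) ∧
      (∀ i, (⟨n i, α i⟩ : Permutation) ∈ U) ∧ π = ⟨∑ i, n i, inflation σ α⟩}

/-- A class is substitution closed if `C[C] ⊆ C`. -/
def SubstClosed (C : Set Permutation) : Prop := classInflate C C ⊆ C

/-- The substitution closure: the smallest substitution closed class containing `C`. -/
def substClosure (C : Set Permutation) : Set Permutation :=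
  ⋂₀ {D | IsPermClass D ∧ SubstClosed D ∧ C ⊆ D}

/-- Iterated inflations: `C^[0] = {1}` and `C^[i+1] = C[C^[i]]`. -/
def iterInflate (C : Set Permutation) : ℕ → Set Permutation
  | 0 => {onePerm}
  | i + 1 => classInflate C (iterInflate C i)

/-- The class of one-point extensions of members of `C`. -/
def onePointExt (C : Set Permutation) : Set Permutation :=
  {π | ∃ σ : Permutation, σ ∈ C ∧ σ.1 + 1 = π.1 ∧ PermLe σ π}

/-- A set of indices is contiguous. -/
def IsIntervalSet {n : ℕ} (s : Set (Fin n)) : Prop :=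
  ∀ ⦃x⦄, x ∈ s → ∀ ⦃y⦄, y ∈ s → ∀ ⦃z⦄, x ≤ z → z ≤ y → z ∈ s

/-- `s` is an interval of the permutation `π`: both `s` and its image are contiguous. -/
def IsPermInterval {n : ℕ} (π : PermOf n) (s : Set (Fin n)) : Prop :=
  IsIntervalSet s ∧ IsIntervalSet (π '' s)

/-- A permutation is simple if it has length at least 2 and only trivial intervals. -/
def IsSimple {n : ℕ} (π : PermOf n) : Prop :=
  2 ≤ n ∧ ∀ s : Set (Fin n), IsPermInterval π s → s.ncard ≤ 1 ∨ s = Set.univ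

/-- The standard figure of a 0/±1 matrix (entries indexed (column, row), zero-based). -/
def stdFigure {t u : ℕ} (M : Fin t → Fin u → ℤ) : Set (ℝ × ℝ) :=
  {p | ∃ (k : Fin t) (l : Fin u) (s : ℝ), 0 ≤ s ∧ s ≤ 1 ∧
    ((M k l = 1 ∧ p = ((k : ℝ) + s, (l : ℝ) + s)) ∨
     (M k l = -1 ∧ p = ((k : ℝ) + s, (l : ℝ) + 1 - s)))}

/-- The geometric grid class of a 0/±1 matrix. -/
def geomGridClass {t u : ℕ} (M : Fin t → Fin u → ℤ) : Set Permutation :=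
  {π | ∃ p : Fin π.1 → ℝ × ℝ, (∀ i, p i ∈ stdFigure M) ∧
    (∀ i j : Fin π.1, i < j → (p i).1 < (p j).1) ∧
    (∀ i j : Fin π.1, π.2 i < π.2 j ↔ (p i).2 < (p j).2)}

/-- A set of permutations is geometrically griddable if it lies in some geometric grid class. -/
def GeomGriddable (C : Set Permutation) : Prop :=
  ∃ (t u : ℕ) (M : Fin t → Fin u → ℤ),
    (∀ k l, M k l = 0 ∨ M k l = 1 ∨ M k l = -1) ∧ C ⊆ geomGridClass M

/-- A class is strongly rational if it and all of its subclasses have rational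
generating functions. -/
def StronglyRational (C : Set Permutation) : Prop :=
  IsRationalPS (gfOf C) ∧ ∀ D, D ⊆ C → IsPermClass D → IsRationalPS (gfOf D)

/-- The interval of indices `[lo, hi)` inside `Fin m`, as a finset. -/
def idxIval (m lo hi : ℕ) : Finset (Fin m) :=
  Finset.univ.filter fun i => lo ≤ (i : ℕ) ∧ (i : ℕ) < hi

/-- `θ[γ]` is a `U`-decomposition of `π`. -/
def IsUDecompOf (U : Set Permutation) (π : Permutation) {m : ℕ} (θ : PermOf m)
    (n : Fin m → ℕ) (γ : ∀ i, PermOf (n i)) : Prop :=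
  (∀ i, 0 < n i) ∧ (∀ i, (⟨n i, γ i⟩ : Permutation) ∈ U) ∧ π = ⟨∑ i, n i, inflation θ γ⟩

def HasUDecompSkel (U : Set Permutation) (π θ : Permutation) : Prop :=
  ∃ n γ, IsUDecompOf U π θ.2 n γ

/-- `θ` is the `U`-profile of `π`: the containment-minimal skeleton of a `U`-decomposition. -/
def IsUProfile (U : Set Permutation) (π θ : Permutation) : Prop :=
  HasUDecompSkel U π θ ∧ ∀ θ', HasUDecompSkel U π θ' → PermLe θ θ'

/-- `θ[γ]` is the left-greedy `U`-decomposition of `π`: the skeleton is the `U`-profile and the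
sequence of block lengths is lexicographically maximal. -/
def IsLeftGreedy (U : Set Permutation) (π : Permutation) {m : ℕ} (θ : PermOf m)
    (n : Fin m → ℕ) (γ : ∀ i, PermOf (n i)) : Prop :=
  IsUDecompOf U π θ n γ ∧ IsUProfile U π ⟨m, θ⟩ ∧
    ∀ (n' : Fin m → ℕ) (γ' : ∀ i, PermOf (n' i)), IsUDecompOf U π θ n' γ' → n' ≠ n →
      ∃ i : Fin m, (∀ i' : Fin m, i' < i → n' i' = n i') ∧ n' i < n i

/-- A property is a set of permutations. -/
abbrev PProperty : Type := Set Permutation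

/-- The collection of properties of `P` satisfied by `π`. -/
def propsOf (P : Set PProperty) (π : Permutation) : Set PProperty := {S | S ∈ P ∧ π ∈ S}

/-- A framework: a skeleton together with a set of properties for each position. -/
abbrev Framework : Type := Σ m : ℕ, PermOf m × (Fin m → Set PProperty)

/-- The framework `F` describes `π`. -/
def FwDescribes (P : Set PProperty) (F : Framework) (π : Permutation) : Prop :=
  ∃ (n : Fin F.1 → ℕ) (α : ∀ i, PermOf (n i)), (∀ i, 0 < n i) ∧
    π = ⟨∑ i, n i, inflation F.2.1 α⟩ ∧ ∀ i, propsOf P ⟨n i, α i⟩ = F.2.2 i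

def FwNonempty (P : Set PProperty) (F : Framework) : Prop := ∃ π, FwDescribes P F π

/-- A simple framework: simple skeleton, with the extra condition for skeletons `12`, `21`. -/
def IsSimpleFw (F : Framework) : Prop :=
  IsSimple F.2.1 ∧
  ∀ i : Fin F.1, (i : ℕ) = 0 →
    (SamePatt F.2.1 perm12 → DSumSet ∉ F.2.2 i) ∧
    (SamePatt F.2.1 perm21 → DSkewSet ∉ F.2.2 i)

/-- A family of properties is query-complete. -/
def QueryComplete (P : Set PProperty) : Prop :=
  ∀ (m : ℕ) (σ : PermOf m) (n n' : Fin m → ℕ)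
    (α : ∀ i, PermOf (n i)) (α' : ∀ i, PermOf (n' i)),
    (∀ i, 0 < n i) → (∀ i, 0 < n' i) →
    (∀ i, propsOf P ⟨n i, α i⟩ = propsOf P ⟨n' i, α' i⟩) →
    propsOf P (⟨∑ i, n i, inflation σ α⟩ : Permutation)
      = propsOf P (⟨∑ i, n' i, inflation σ α'⟩ : Permutation)

/-- The avoidance property `Av(δ)`. -/
def AvSet (δ : Permutation) : Set Permutation := {π | ¬ PermLe δ π}

/-- The first component avoidance property `Av^{#1}(δ)`. -/
def AvFCSet (δ : Permutation) : Set Permutation := {π | ¬ PermLe δ (firstComp π)}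

/-- The family of properties `P_B`. -/
def PB (B : Set Permutation) : Set PProperty :=
  {DSumSet, DSkewSet} ∪ {S | ∃ δ, (∃ β ∈ B, PermLe δ β) ∧ S = AvSet δ}

/-- The family of properties `P̃_B`. -/
def PBt (B : Set Permutation) : Set PProperty :=
  PB B ∪ {S | ∃ δ, (∃ β ∈ B, PermLe δ β) ∧ S = AvFCSet δ}

/-- A partial multiplication matrix. -/
def IsPMM {t u : ℕ} (M : Fin t → Fin u → ℤ) : Prop :=
  ∃ (c : Fin t → ℤ) (r : Fin u → ℤ),
    (∀ k, c k = 1 ∨ c k = -1) ∧ (∀ l, r l = 1 ∨ r l = -1) ∧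
    ∀ k l, M k l = c k * r l ∨ M k l = 0

/-- The matrix `M^{×2}`: each line segment of the standard figure is subdivided in two. -/
def mTimes2 {t u : ℕ} (M : Fin t → Fin u → ℤ) : Fin (2 * t) → Fin (2 * u) → ℤ :=
  fun k l =>
    if M ⟨(k : ℕ) / 2, by have := k.isLt; omega⟩ ⟨(l : ℕ) / 2, by have := l.isLt; omega⟩ = 1
        ∧ (k : ℕ) % 2 = (l : ℕ) % 2 then 1
    else if M ⟨(k : ℕ) / 2, by have := k.isLt; omega⟩ ⟨(l : ℕ) / 2, by have := l.isLt; omega⟩ = -1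
        ∧ (k : ℕ) % 2 ≠ (l : ℕ) % 2 then -1
    else 0

/-- A regular language: one accepted by a DFA with finitely many states. -/
def IsRegularLang {A : Type _} (L : Set (List A)) : Prop :=
  ∃ (S : Type) (_ : Fintype S) (M : DFA A S), M.accepts = L

/-- The cell alphabet of a matrix: the nonzero cells. -/
def CellAlph {t u : ℕ} (M : Fin t → Fin u → ℤ) : Type := {kl : Fin t × Fin u // M kl.1 kl.2 ≠ 0}

/-- The point of the standard figure corresponding to the `i`-th letter of a word of cells,
relative to column signs `c` and row signs `r`. -/
noncomputable def pointOfLetter {t u : ℕ} (c : Fin t → ℤ) (r : Fin u → ℤ) (n : ℕ)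
    (w : Fin n → Fin t × Fin u) (i : Fin n) : ℝ × ℝ :=
  (if c (w i).1 = 1 then ((w i).1 : ℝ) + (((i : ℕ) + 1) / (n + 1) : ℝ)
     else ((w i).1 : ℝ) + 1 - (((i : ℕ) + 1) / (n + 1) : ℝ),
   if r (w i).2 = 1 then ((w i).2 : ℝ) + (((i : ℕ) + 1) / (n + 1) : ℝ)
     else ((w i).2 : ℝ) + 1 - (((i : ℕ) + 1) / (n + 1) : ℝ))

/-- The permutation determined by a family of points in the plane with pairwise distinct
coordinates: sort by `x`, rank by `y`. -/
noncomputable def permOfPoints {n : ℕ} (p : Fin n → ℝ × ℝ) : PermOf n :=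
  (Tuple.sort fun i => (p i).1).trans (Tuple.sort fun i => (p i).2).symm

/-- The map `φ^P` from words over `Σ × 2^P` to frameworks, built from the encoding `φ` and the
index correspondence `ψ`. -/
noncomputable def fwOfWord {A : Type _} {t u : ℕ} (c : Fin t → ℤ) (r : Fin u → ℤ)
    (cell : A → Fin t × Fin u) (qs : A → Set PProperty) (v : List A) : Framework :=
  ⟨v.length,
    (permOfPoints (pointOfLetter c r v.length fun j => cell (v.get j)),
     fun i => qs (v.get ((Tuple.sort fun j =>
        (pointOfLetter c r v.length (fun j' => cell (v.get j')) j).1) i)))⟩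

/-- The number of permutations of length `n` in `C`. -/
noncomputable def countLen (C : Set Permutation) (n : ℕ) : ℕ :=
  {π : PermOf n | (⟨n, π⟩ : Permutation) ∈ C}.ncard

namespace BasisAux

open Finset

lemma permLe_refl (x : Permutation) : PermLe x x :=
  ⟨OrderEmbedding.ofStrictMono id strictMono_id, fun _ _ => Iff.rfl⟩

lemma pattContains_trans {a b c : ℕ} {x : PermOf a} {y : PermOf b} {z : PermOf c}
    (h1 : PattContains x y) (h2 : PattContains y z) : PattContains x z := by
  obtain ⟨f, hf⟩ := h1; obtain ⟨g, hg⟩ := h2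
  exact ⟨f.trans g, fun s t => (hf s t).trans (hg (f s) (f t))⟩

lemma permLe_trans {x y z : Permutation} (h1 : PermLe x y) (h2 : PermLe y z) : PermLe x z :=
  pattContains_trans h1 h2

lemma permLe_len {x y : Permutation} (h : PermLe x y) : x.1 ≤ y.1 := by
  obtain ⟨f, -⟩ := h
  simpa using Fintype.card_le_of_embedding f.toEmbedding

lemma fin_strictMono_id {n : ℕ} {f : Fin n → Fin n} (h : StrictMono f) (i : Fin n) : f i = i := by
  have hs : Function.Surjective f := Finite.injective_iff_surjective.mp h.injective
  have he : (StrictMono.orderIsoOfSurjective f h hs : Fin n ≃o Fin n) = OrderIso.refl (Fin n) :=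
    Subsingleton.elim _ _
  have : (StrictMono.orderIsoOfSurjective f h hs) i = i := by rw [he]; rfl
  simpa [StrictMono.coe_orderIsoOfSurjective] using this

lemma pattContains_eq {n : ℕ} {x y : PermOf n} (h : PattContains x y) : x = y := by
  obtain ⟨f, hf⟩ := h
  have hfi : ∀ i, f i = i := fin_strictMono_id f.strictMono
  have h2 : StrictMono fun i => y (x.symm i) := by
    intro i j hij
    have := (hf (x.symm i) (x.symm j)).mp (by simpa using hij)
    simpa [hfi] using this
  refine Equiv.ext fun i => ?_
  have := fin_strictMono_id h2 (x i)
  simpa using this.symm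

lemma permLe_eq {x y : Permutation} (h : PermLe x y) (hl : y.1 ≤ x.1) : x = y := by
  obtain ⟨a, x2⟩ := x; obtain ⟨b, y2⟩ := y
  have hab : a = b := le_antisymm (permLe_len h) hl
  subst hab
  exact congrArg _ (pattContains_eq h)

lemma one_le {y : Permutation} (hy : 0 < y.1) : PermLe onePerm y := by
  refine ⟨OrderEmbedding.ofStrictMono (fun _ => ⟨0, hy⟩) ?_, fun s t => ?_⟩
  · intro a b hab
    have ha : (a : ℕ) < 1 := a.isLt
    have hb : (b : ℕ) < 1 := b.isLt
    rw [Fin.lt_def] at hab; omega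
  · constructor
    · intro hst
      have hs : ((onePerm.2 s : Fin 1) : ℕ) < 1 := (onePerm.2 s).isLt
      have ht : ((onePerm.2 t : Fin 1) : ℕ) < 1 := (onePerm.2 t).isLt
      rw [Fin.lt_def] at hst; omega
    · intro hst; exact absurd hst (lt_irrefl _)

lemma zero_le (y : Permutation) (x0 : PermOf 0) : PermLe ⟨0, x0⟩ y :=
  ⟨OrderEmbedding.ofStrictMono (fun p => p.elim0) (fun p => p.elim0), fun s _ => s.elim0⟩

lemma sigmaFinEquiv_val : ∀ {m : ℕ} {n : Fin m → ℕ} (i : Fin m) (j : Fin (n i)),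
    ((sigmaFinEquiv ⟨i, j⟩ : Fin (∑ i, n i)) : ℕ)
      = (∑ x ∈ Finset.univ.filter (· < i), n x) + (j : ℕ)
  | 0, _, i, _ => i.elim0
  | m + 1, n, i, j => by
    have hrw : ∀ x : Σ i : Fin (m+1), Fin (n i),
        sigmaFinEquiv (n := n) x = finCongr (Fin.sum_univ_succ n).symm
          (finSumFinEquiv (((Equiv.refl (Fin (n 0))).sumCongr sigmaFinEquiv)
            ((sigmaFinFstEquiv fun i => Fin (n i)) x))) := fun _ => rfl
    induction i using Fin.cases with
    | zero =>
        rw [hrw]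
        simp [sigmaFinFstEquiv]
    | succ i =>
        rw [hrw]
        have hIH := sigmaFinEquiv_val (n := fun x : Fin m => n x.succ) i j
        simp only [sigmaFinFstEquiv, Fin.cases_succ, Equiv.coe_fn_mk, Equiv.sumCongr_apply,
          Sum.map_inr, finCongr_apply, Fin.coe_cast, finSumFinEquiv_apply_right,
          Fin.natAdd]
        rw [hIH]
        have hsum : ∑ x ∈ Finset.univ.filter (· < i.succ), n x
            = n 0 + ∑ x ∈ Finset.univ.filter (· < i), n x.succ := by
          rw [Finset.sum_filter, Finset.sum_filter, Fin.sum_univ_succ]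
          simp [Fin.succ_lt_succ_iff, Fin.succ_pos]
        rw [hsum]; omega

lemma blockSum_le_sum {m : ℕ} (n : Fin m → ℕ) {i i' : Fin m} (h : i < i') :
    (∑ x ∈ Finset.univ.filter (· < i), n x) + n i ≤ ∑ x ∈ Finset.univ.filter (· < i'), n x := by
  have hsub : insert i (Finset.univ.filter (· < i)) ⊆ Finset.univ.filter (· < i') := by
    intro x hx
    simp only [Finset.mem_insert, Finset.mem_filter, Finset.mem_univ, true_and] at hx ⊢
    rcases hx with rfl | hx
    · exact h
    · exact hx.trans h
  have hle := Finset.sum_le_sum_of_subset hsub (f := n)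
  rw [Finset.sum_insert (by simp)] at hle
  omega

lemma blockSum_lt_iff {m : ℕ} (n : Fin m → ℕ) {i i' : Fin m} {j j' : ℕ}
    (hj : j < n i) (hj' : j' < n i') :
    (∑ x ∈ Finset.univ.filter (· < i), n x) + j < (∑ x ∈ Finset.univ.filter (· < i'), n x) + j'
      ↔ i < i' ∨ (i = i' ∧ j < j') := by
  rcases lt_trichotomy i i' with h | h | h
  · have := blockSum_le_sum n h
    simp only [h, true_or, iff_true]; omega
  · subst h
    simp only [lt_irrefl, false_or, true_and]; omega
  · have := blockSum_le_sum n h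
    have h1 : ¬ i < i' := not_lt_of_gt h
    have h2 : i ≠ i' := ne_of_gt h
    simp only [h1, h2, false_and, or_self, iff_false]; omega

lemma sigmaFinEquiv_lt_iff {m : ℕ} {n : Fin m → ℕ} {i i' : Fin m} {j : Fin (n i)}
    {j' : Fin (n i')} :
    (sigmaFinEquiv ⟨i, j⟩ : Fin (∑ i, n i)) < sigmaFinEquiv ⟨i', j'⟩
      ↔ i < i' ∨ (i = i' ∧ (j : ℕ) < (j' : ℕ)) := by
  rw [Fin.lt_def, sigmaFinEquiv_val, sigmaFinEquiv_val]
  exact blockSum_lt_iff n j.isLt j'.isLt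

lemma inflation_apply {m : ℕ} (σ : PermOf m) {n : Fin m → ℕ} (α : ∀ i, PermOf (n i))
    (i : Fin m) (j : Fin (n i)) :
    ((inflation σ α (sigmaFinEquiv ⟨i, j⟩) : Fin (∑ i, n i)) : ℕ)
      = (∑ x ∈ Finset.univ.filter (· < σ i), n (σ.symm x)) + ((α i j : Fin (n i)) : ℕ) := by
  simp only [inflation, Equiv.trans_apply, Equiv.symm_apply_apply]
  rw [show (Equiv.sigmaCongrRight fun i =>
        (α i).trans (finCongr (congrArg n (σ.symm_apply_apply i).symm)))
      ⟨i, j⟩ = ⟨i, (finCongr (congrArg n (σ.symm_apply_apply i).symm)) (α i j)⟩ from rfl]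
  rw [show (Equiv.sigmaCongrLeft (β := fun v : Fin m => Fin (n (σ.symm v))) σ)
      ⟨i, (finCongr (congrArg n (σ.symm_apply_apply i).symm)) (α i j)⟩
      = ⟨σ i, (finCongr (congrArg n (σ.symm_apply_apply i).symm)) (α i j)⟩ from rfl]
  rw [finCongr_apply, Fin.coe_cast, sigmaFinEquiv_val]
  simp

lemma inflation_lt_iff {m : ℕ} (σ : PermOf m) {n : Fin m → ℕ} (α : ∀ i, PermOf (n i))
    {i i' : Fin m} {j : Fin (n i)} {j' : Fin (n i')} :
    inflation σ α (sigmaFinEquiv ⟨i, j⟩) < inflation σ α (sigmaFinEquiv ⟨i', j'⟩)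
      ↔ σ i < σ i' ∨ (i = i' ∧ ((α i j : Fin (n i)) : ℕ) < ((α i' j' : Fin (n i')) : ℕ)) := by
  rw [Fin.lt_def, inflation_apply, inflation_apply]
  rw [blockSum_lt_iff (fun v => n (σ.symm v))
    (by simpa using (α i j).isLt) (by simpa using (α i' j').isLt)]
  rw [show (σ i = σ i') ↔ (i = i') from σ.injective.eq_iff]

lemma val_cast_apply {m : ℕ} {n : Fin m → ℕ} (α : ∀ i, PermOf (n i)) {i k : Fin m}
    (h : i = k) (j : Fin (n i)) :
    ((α i j : Fin (n i)) : ℕ) = ((α k (Fin.cast (congrArg n h) j) : Fin (n k)) : ℕ) := by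
  subst h; rfl

lemma simple_le_inflation {l m : ℕ} {τ : PermOf l} (hτ : IsSimple τ)
    {σ : PermOf m} {n : Fin m → ℕ} (α : ∀ i, PermOf (n i))
    (h : PattContains τ (inflation σ α)) :
    PattContains τ σ ∨ ∃ i, PattContains τ (α i) := by
  obtain ⟨f, hf⟩ := h
  set z : Fin l → Σ i : Fin m, Fin (n i) := fun s => sigmaFinEquiv.symm (f s) with hz
  have hfz : ∀ s, (f s : Fin (∑ i, n i)) = sigmaFinEquiv (z s) :=
    fun s => (Equiv.apply_symm_apply _ _).symm
  set I : Fin l → Fin m := fun s => (z s).1 with hI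
  have key : ∀ s t, τ s < τ t ↔ (σ (I s) < σ (I t) ∨
      (I s = I t ∧ ((α (I s) (z s).2 : Fin _) : ℕ) < ((α (I t) (z t).2 : Fin _) : ℕ))) := by
    intro s t
    rw [hf s t, hfz s, hfz t]
    exact inflation_lt_iff σ α
  have posle : ∀ s t, f s < f t ↔ (I s < I t ∨ (I s = I t ∧ ((z s).2 : ℕ) < ((z t).2 : ℕ))) := by
    intro s t
    rw [hfz s, hfz t]
    exact sigmaFinEquiv_lt_iff
  have Imono : Monotone I := by
    intro s t hst
    rcases eq_or_lt_of_le hst with rfl | hlt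
    · exact le_rfl
    rcases (posle s t).mp (f.strictMono hlt) with h | ⟨h, -⟩
    · exact h.le
    · exact h.le
  by_cases hinj : Function.Injective I
  · left
    refine ⟨OrderEmbedding.ofStrictMono I (Imono.strictMono_of_injective hinj), fun s t => ?_⟩
    rw [key s t]
    constructor
    · rintro (h | ⟨he, hv⟩)
      · exact h
      · cases hinj he; exact absurd hv (lt_irrefl _)
    · exact Or.inl
  · right
    rw [Function.not_injective_iff] at hinj
    obtain ⟨s0, t0, he0, hne0⟩ := hinj
    obtain ⟨i, hi⟩ : ∃ i, ∀ s, I s = i := by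
      set S : Set (Fin l) := {s | I s = I s0} with hS
      have Kmono : ∀ a b, τ a ≤ τ b → σ (I a) ≤ σ (I b) := by
        intro a b hab
        rcases eq_or_lt_of_le hab with he | hlt
        · cases τ.injective he; exact le_rfl
        rcases (key a b).mp hlt with h | ⟨h, -⟩
        · exact h.le
        · exact (congrArg σ h).le
      have hSint : IsPermInterval τ S := by
        constructor
        · intro x hx y hy w hxw hwy
          have h1 : I x ≤ I w := Imono hxw
          have h2 : I w ≤ I y := Imono hwy
          rw [hx] at h1; rw [hy] at h2
          exact le_antisymm h2 h1
        · rintro v ⟨x, hx, rfl⟩ u ⟨y, hy, rfl⟩ w hxw hwy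
          refine ⟨τ.symm w, ?_, τ.apply_symm_apply w⟩
          have h1 : σ (I x) ≤ σ (I (τ.symm w)) := Kmono _ _ (by rwa [τ.apply_symm_apply])
          have h2 : σ (I (τ.symm w)) ≤ σ (I y) := Kmono _ _ (by rwa [τ.apply_symm_apply])
          rw [hx] at h1; rw [hy] at h2
          exact σ.injective (le_antisymm h2 h1)
      have hS2 : ¬ S.ncard ≤ 1 := by
        intro h1
        rw [Set.ncard_le_one (S.toFinite)] at h1
        exact hne0 (h1 s0 rfl t0 he0.symm)
      have hU : S = Set.univ := (hτ.2 S hSint).resolve_left hS2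
      exact ⟨I s0, fun s => by
        have : s ∈ S := hU ▸ Set.mem_univ s
        exact this⟩
    refine ⟨i, OrderEmbedding.ofStrictMono
      (fun s => Fin.cast (congrArg n (hi s)) (z s).2) ?_, fun s t => ?_⟩
    · intro s t hst
      rcases (posle s t).mp (f.strictMono hst) with h | ⟨-, h⟩
      · rw [hi s, hi t] at h; exact absurd h (lt_irrefl _)
      · rw [Fin.lt_def]; simpa using h
    · rw [key s t]
      constructor
      · rintro (h | ⟨-, hv⟩)
        · rw [hi s, hi t] at h; exact absurd h (lt_irrefl _)
        · rw [Fin.lt_def]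
          rw [val_cast_apply α (hi s), val_cast_apply α (hi t)] at hv
          exact hv
      · intro hlt
        refine Or.inr ⟨(hi s).trans (hi t).symm, ?_⟩
        rw [val_cast_apply α (hi s), val_cast_apply α (hi t)]
        rw [Fin.lt_def] at hlt
        exact hlt

lemma perm_sigma_eq {M N : ℕ} (h : M = N) (rho : PermOf M) (pi : PermOf N)
    (hh : ∀ p : Fin M, ((rho p : Fin M) : ℕ) = ((pi (Fin.cast h p) : Fin N) : ℕ)) :
    (⟨M, rho⟩ : Permutation) = ⟨N, pi⟩ := by
  subst h
  exact congrArg _ (Equiv.ext fun p => Fin.ext (hh p))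

lemma intervalSet_descr {N : ℕ} {s : Set (Fin N)} (h : IsIntervalSet s) (hne : s.Nonempty) :
    ∃ A : ℕ, A + s.ncard ≤ N ∧ ∀ p : Fin N, p ∈ s ↔ A ≤ (p : ℕ) ∧ (p : ℕ) < A + s.ncard := by
  classical
  set F : Finset (Fin N) := (Set.toFinite s).toFinset with hF
  have hFne : F.Nonempty := by
    rw [hF, Set.Finite.toFinset_nonempty]; exact hne
  set a := F.min' hFne with ha
  set c := F.max' hFne with hc
  have hmem : ∀ p : Fin N, p ∈ s ↔ p ∈ F := fun p => by
    rw [hF, Set.Finite.mem_toFinset]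
  have hs : s = Set.Icc a c := by
    apply Set.eq_of_subset_of_subset
    · intro p hp
      exact ⟨F.min'_le p ((hmem p).mp hp), F.le_max' p ((hmem p).mp hp)⟩
    · intro p hp
      exact h ((hmem a).mpr (F.min'_mem hFne)) ((hmem c).mpr (F.max'_mem hFne)) hp.1 hp.2
  have hac : a ≤ c := F.min'_le c (F.max'_mem hFne)
  have hcard : s.ncard = (c : ℕ) + 1 - (a : ℕ) := by
    rw [hs, ← Finset.coe_Icc, Set.ncard_coe_finset, Fin.card_Icc]
  refine ⟨(a : ℕ), ?_, fun p => ?_⟩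
  · have := c.isLt
    rw [hcard]
    omega
  · have hac' : (a : ℕ) ≤ (c : ℕ) := hac
    rw [hcard, hs]
    simp only [Set.mem_Icc, Fin.le_def]
    omega

/-- Expanded position of a contracted index. -/
def epN (A k q : ℕ) : ℕ := if q ≤ A then q else q + (k - 1)

/-- Contracted value. -/
def cvF (B k v : ℕ) : ℕ := if v < B then v else if v < B + k then B else v - (k - 1)

lemma cvF_lt_iff {B k v v' : ℕ} (hk : 1 ≤ k)
    (h : ¬(B ≤ v ∧ v < B + k) ∨ ¬(B ≤ v' ∧ v' < B + k) ∨ v = v') :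
    cvF B k v < cvF B k v' ↔ v < v' := by
  unfold cvF; split_ifs <;> omega

lemma exists_decomp {N : ℕ} (pi : PermOf N) (s : Set (Fin N)) (hint : IsPermInterval pi s)
    (h2 : 2 ≤ s.ncard) (hns : s ≠ Set.univ) :
    ∃ (m : ℕ) (σ : PermOf m) (n : Fin m → ℕ) (α : ∀ i, PermOf (n i)),
      m < N ∧ (∀ i, 0 < n i) ∧ (∀ i, n i < N) ∧
      PermLe ⟨m, σ⟩ ⟨N, pi⟩ ∧ (∀ i, PermLe ⟨n i, α i⟩ ⟨N, pi⟩) ∧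
      (⟨N, pi⟩ : Permutation) = ⟨∑ i, n i, inflation σ α⟩ := by
  classical
  have hsne : s.Nonempty := by
    rw [Set.nonempty_iff_ne_empty]
    intro hc; rw [hc] at h2; simp at h2
  obtain ⟨A, hAk, hmemA⟩ := intervalSet_descr hint.1 hsne
  obtain ⟨B, hBk0, hmemB0⟩ := intervalSet_descr hint.2 (hsne.image pi)
  have hicard : (pi '' s).ncard = s.ncard :=
    Set.ncard_image_of_injective s pi.injective
  rw [hicard] at hBk0 hmemB0
  set k := s.ncard with hk
  have hmemB : ∀ p : Fin N, p ∈ s ↔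
      (B ≤ ((pi p : Fin N) : ℕ) ∧ ((pi p : Fin N) : ℕ) < B + k) := by
    intro p
    rw [← hmemB0 (pi p)]
    constructor
    · exact fun hp => Set.mem_image_of_mem _ hp
    · rintro ⟨q, hq, hqe⟩; cases pi.injective hqe; exact hq
  have hkN : k < N := by
    have hss : s ⊂ Set.univ := Set.ssubset_univ_iff.mpr hns
    have := Set.ncard_lt_ncard hss Set.finite_univ
    simpa [Set.ncard_univ] using this
  have hk1 : 1 ≤ k := by omega
  set m := N - k + 1 with hm
  have hmN : m < N := by omega
  have hA'lt : A < m := by omega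
  set a' : Fin m := ⟨A, hA'lt⟩ with ha'
  have hepB : ∀ q : Fin m, epN A k (q : ℕ) < N := by
    intro q; have := q.isLt; unfold epN; split <;> omega
  set epF : Fin m → Fin N := fun q => ⟨epN A k (q : ℕ), hepB q⟩ with hepF
  have hep_mono : StrictMono epF := by
    intro q q' h
    rw [Fin.lt_def] at h ⊢
    show epN A k (q : ℕ) < epN A k (q' : ℕ)
    unfold epN; split <;> split <;> omega
  have hmemA' : ∀ q : Fin m, (A ≤ ((epF q : Fin N) : ℕ) ∧ ((epF q : Fin N) : ℕ) < A + k)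
      ↔ (q : ℕ) = A := by
    intro q
    show (A ≤ epN A k (q : ℕ) ∧ epN A k (q : ℕ) < A + k) ↔ _
    unfold epN; split <;> omega
  have hwin : ∀ q : Fin m, (q : ℕ) = A →
      B ≤ ((pi (epF q) : Fin N) : ℕ) ∧ ((pi (epF q) : Fin N) : ℕ) < B + k :=
    fun q hq => (hmemB _).mp ((hmemA _).mpr ((hmemA' q).mpr hq))
  have hout : ∀ q : Fin m, (q : ℕ) ≠ A →
      ¬(B ≤ ((pi (epF q) : Fin N) : ℕ) ∧ ((pi (epF q) : Fin N) : ℕ) < B + k) :=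
    fun q hq hcon => hq ((hmemA' q).mp ((hmemA _).mp ((hmemB _).mpr hcon)))
  have hcvm : ∀ v : ℕ, v < N → cvF B k v < m := by
    intro v hv; unfold cvF; split_ifs <;> omega
  set σ0 : Fin m → Fin m :=
    fun q => ⟨cvF B k ((pi (epF q) : Fin N) : ℕ), hcvm _ (pi (epF q)).isLt⟩ with hσ0
  have hval_ne : ∀ q q' : Fin m, q ≠ q' →
      ((pi (epF q) : Fin N) : ℕ) ≠ ((pi (epF q') : Fin N) : ℕ) :=
    fun q q' hqq' hve => hqq' (hep_mono.injective (pi.injective (Fin.ext hve)))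
  have hσ0inj : Function.Injective σ0 := by
    intro q q' hqq'
    by_contra hne
    have hval : cvF B k ((pi (epF q) : Fin N) : ℕ) = cvF B k ((pi (epF q') : Fin N) : ℕ) :=
      congrArg Fin.val hqq'
    have hvne := hval_ne q q' hne
    by_cases h1 : (q : ℕ) = A <;> by_cases h1' : (q' : ℕ) = A
    · exact hne (Fin.ext (h1.trans h1'.symm))
    · have hw := hwin q h1; have ho := hout q' h1'
      revert hval; unfold cvF; split_ifs <;> omega
    · have hw := hwin q' h1'; have ho := hout q h1
      revert hval; unfold cvF; split_ifs <;> omega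
    · have ho := hout q h1; have ho' := hout q' h1'
      revert hval; unfold cvF; split_ifs <;> omega
  set σ : PermOf m := Equiv.ofBijective σ0 (Finite.injective_iff_bijective.mp hσ0inj) with hσ
  have hσval : ∀ q, ((σ q : Fin m) : ℕ) = cvF B k ((pi (epF q) : Fin N) : ℕ) := fun q => rfl
  have hσa' : ((σ a' : Fin m) : ℕ) = B := by
    rw [hσval]
    have hw := hwin a' rfl
    unfold cvF; split_ifs <;> omega
  have hblen : ∀ j : ℕ, j < k → A + j < N := by intro j hj; omega
  have hwinj : ∀ (j : ℕ) (hj : j < k),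
      B ≤ ((pi ⟨A + j, hblen _ hj⟩ : Fin N) : ℕ) ∧
        ((pi ⟨A + j, hblen _ hj⟩ : Fin N) : ℕ) < B + k := by
    intro j hj
    exact (hmemB _).mp ((hmemA _).mpr
      (show A ≤ A + j ∧ A + j < A + k from ⟨by omega, by omega⟩))
  set β0 : Fin k → Fin k := fun j =>
    ⟨((pi ⟨A + (j : ℕ), hblen _ j.isLt⟩ : Fin N) : ℕ) - B, by
      have := hwinj (j : ℕ) j.isLt; omega⟩ with hβ0
  have hβ0inj : Function.Injective β0 := by
    intro j j' hjj'
    have h : ((pi ⟨A + (j : ℕ), hblen _ j.isLt⟩ : Fin N) : ℕ) - B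
        = ((pi ⟨A + (j' : ℕ), hblen _ j'.isLt⟩ : Fin N) : ℕ) - B := congrArg Fin.val hjj'
    have hw := hwinj (j : ℕ) j.isLt
    have hw' := hwinj (j' : ℕ) j'.isLt
    have hv : ((pi ⟨A + (j : ℕ), hblen _ j.isLt⟩ : Fin N) : ℕ)
        = ((pi ⟨A + (j' : ℕ), hblen _ j'.isLt⟩ : Fin N) : ℕ) := by omega
    have h2 : A + (j : ℕ) = A + (j' : ℕ) := congrArg Fin.val (pi.injective (Fin.ext hv))
    exact Fin.ext (by omega)
  set β : PermOf k := Equiv.ofBijective β0 (Finite.injective_iff_bijective.mp hβ0inj) with hβ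
  set n : Fin m → ℕ := fun q => if q = a' then k else 1 with hn
  have hn_a' : n a' = k := if_pos rfl
  have hone : ∀ q, q ≠ a' → n q = 1 := fun q h => if_neg h
  set α : ∀ q, PermOf (n q) := fun q =>
    if h : q = a' then
      (finCongr (show n q = k by rw [h]; exact hn_a')).trans
        (β.trans (finCongr (show k = n q by rw [h, hn_a'])))
    else Equiv.refl _ with hα
  have hαa' : ∀ (j : Fin (n a')) (hj : (j : ℕ) < k),
      ((α a' j : Fin (n a')) : ℕ)
        = ((pi ⟨A + (j : ℕ), hblen _ hj⟩ : Fin N) : ℕ) - B := by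
    intro j hj
    simp only [hα]
    rw [dif_pos trivial]
    rfl
  have hαo : ∀ (q : Fin m) (h : q ≠ a') (j : Fin (n q)),
      ((α q j : Fin (n q)) : ℕ) = (j : ℕ) := by
    intro q h j
    simp only [hα]
    rw [dif_neg h]
    rfl
  have hsplit : ∀ q, n q = 1 + if q = a' then k - 1 else 0 := by
    intro q; simp only [hn]; split <;> omega
  have hsum : (∑ q, n q) = N := by
    rw [Finset.sum_congr rfl fun q _ => hsplit q, Finset.sum_add_distrib,
      Finset.sum_const, Finset.sum_ite_eq' Finset.univ a' fun _ => k - 1]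
    simp only [Finset.mem_univ, if_true, smul_eq_mul, mul_one, Finset.card_univ,
      Fintype.card_fin]
    omega
  have hcardlt : ∀ q : Fin m, (Finset.univ.filter (· < q)).card = (q : ℕ) := by
    intro q
    rw [show Finset.univ.filter (· < q) = Finset.Iio q by ext x; simp, Fin.card_Iio]
  have hpsum : ∀ (nn : Fin m → ℕ) (b w : Fin m),
      (∀ x, nn x = 1 + if x = b then k - 1 else 0) →
      (∑ x ∈ Finset.univ.filter (· < w), nn x) = (w : ℕ) + if b < w then k - 1 else 0 := by
    intro nn b w hnn
    rw [Finset.sum_congr rfl fun x _ => hnn x, Finset.sum_add_distrib, Finset.sum_const,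
      Finset.sum_ite_eq' _ b fun _ => k - 1, hcardlt]
    simp [Finset.mem_filter]
  have hnσ : ∀ x, n (σ.symm x) = 1 + if x = σ a' then k - 1 else 0 := by
    intro x
    rw [hsplit (σ.symm x)]
    by_cases hx : σ.symm x = a'
    · rw [if_pos hx, if_pos ((Equiv.symm_apply_eq σ).mp hx)]
    · rw [if_neg hx, if_neg fun h => hx ((Equiv.symm_apply_eq σ).mpr h)]
  have hnpos : ∀ q, 0 < n q := by
    intro q; by_cases h : q = a'
    · rw [h, hn_a']; omega
    · rw [hone q h]; omega
  have hnlt : ∀ q, n q < N := by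
    intro q; by_cases h : q = a'
    · rw [h, hn_a']; omega
    · rw [hone q h]; omega
  refine ⟨m, σ, n, α, hmN, hnpos, hnlt, ?_, ?_, ?_⟩
  · -- skeleton pattern
    show PattContains σ pi
    refine ⟨OrderEmbedding.ofStrictMono epF hep_mono, fun q q' => ?_⟩
    show σ q < σ q' ↔ pi (epF q) < pi (epF q')
    rw [Fin.lt_def, Fin.lt_def, hσval, hσval]
    apply cvF_lt_iff hk1
    by_cases h1 : (q : ℕ) = A
    · by_cases h1' : (q' : ℕ) = A
      · right; right
        rw [show q = q' from Fin.ext (h1.trans h1'.symm)]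
      · right; left; exact hout q' h1'
    · left; exact hout q h1
  · -- blocks
    intro q
    show PattContains (α q) pi
    by_cases h : q = a'
    · subst h
      have hjk : ∀ j : Fin (n a'), (j : ℕ) < k :=
        fun j => lt_of_lt_of_eq j.isLt hn_a'
      refine ⟨OrderEmbedding.ofStrictMono
        (fun j => (⟨A + (j : ℕ), hblen _ (hjk j)⟩ : Fin N)) ?_, fun j j' => ?_⟩
      · intro j j' hjj'
        rw [Fin.lt_def] at hjj' ⊢
        show A + (j : ℕ) < A + (j' : ℕ)
        omega
      · show α a' j < α a' j' ↔ _
        rw [Fin.lt_def, Fin.lt_def, hαa' j (hjk j), hαa' j' (hjk j')]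
        have hw := hwinj (j : ℕ) (hjk j)
        have hw' := hwinj (j' : ℕ) (hjk j')
        show _ ↔ ((pi ⟨A + (j : ℕ), hblen _ (hjk j)⟩ : Fin N) : ℕ)
          < ((pi ⟨A + (j' : ℕ), hblen _ (hjk j')⟩ : Fin N) : ℕ)
        omega
    · have h1 : n q = 1 := hone q h
      have hNpos : 0 < N := by omega
      refine ⟨OrderEmbedding.ofStrictMono (fun _ => (⟨0, hNpos⟩ : Fin N)) ?_, fun j j' => ?_⟩
      · intro j j' hjj'
        exfalso
        have hj : (j : ℕ) < 1 := lt_of_lt_of_eq j.isLt h1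
        have hj' : (j' : ℕ) < 1 := lt_of_lt_of_eq j'.isLt h1
        rw [Fin.lt_def] at hjj'; omega
      · constructor
        · intro hlt
          exfalso
          have hj : ((α q j : Fin (n q)) : ℕ) < 1 := lt_of_lt_of_eq (α q j).isLt h1
          have hj' : ((α q j' : Fin (n q)) : ℕ) < 1 := lt_of_lt_of_eq (α q j').isLt h1
          rw [Fin.lt_def] at hlt; omega
        · intro hlt; exact absurd hlt (lt_irrefl _)
  · -- the inflation equality
    refine (perm_sigma_eq hsum (inflation σ α) pi ?_).symm
    intro P
    obtain ⟨⟨q, j⟩, rfl⟩ : ∃ x, sigmaFinEquiv x = P := sigmaFinEquiv.surjective P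
    rw [inflation_apply, hpsum _ _ _ hnσ]
    have hposval : ((Fin.cast hsum (sigmaFinEquiv ⟨q, j⟩) : Fin N) : ℕ)
        = ((q : ℕ) + if a' < q then k - 1 else 0) + (j : ℕ) := by
      rw [Fin.coe_cast, sigmaFinEquiv_val, hpsum n a' q hsplit]
    by_cases hq : q = a'
    · subst hq
      have hjk : (j : ℕ) < k := lt_of_lt_of_eq j.isLt hn_a'
      have hPP : Fin.cast hsum (sigmaFinEquiv ⟨a', j⟩)
          = (⟨A + (j : ℕ), hblen _ hjk⟩ : Fin N) := by
        apply Fin.ext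
        rw [hposval, if_neg (lt_irrefl a')]
        show A + 0 + (j : ℕ) = A + (j : ℕ)
        omega
      rw [hPP, hαa' j hjk, if_neg (lt_irrefl (σ a')), hσa']
      have hw := hwinj (j : ℕ) hjk
      omega
    · have h1 : n q = 1 := hone q hq
      have hj0 : (j : ℕ) = 0 := by have := lt_of_lt_of_eq j.isLt h1; omega
      have hα0 : ((α q j : Fin (n q)) : ℕ) = 0 := by rw [hαo q hq j, hj0]
      have hqa : (q : ℕ) ≠ A := fun hc => hq (Fin.ext hc)
      have hPP : Fin.cast hsum (sigmaFinEquiv ⟨q, j⟩) = epF q := by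
        apply Fin.ext
        rw [hposval]
        show _ = epN A k (q : ℕ)
        by_cases hlt : a' < q
        · have hAq : ¬ (q : ℕ) ≤ A := by
            have := Fin.lt_def.mp hlt; change A < (q : ℕ) at this; omega
          rw [if_pos hlt]
          unfold epN
          rw [if_neg hAq]
          omega
        · have hAq : (q : ℕ) ≤ A := by
            have := Fin.le_def.mp (not_lt.mp hlt); change (q : ℕ) ≤ A at this; exact this
          rw [if_neg hlt]
          unfold epN
          rw [if_pos hAq]
          omega
      rw [hPP, hα0, hσval q]
      have ho := hout q hqa
      have hcond : (σ a' < σ q) ↔ B < cvF B k ((pi (epF q) : Fin N) : ℕ) := by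
        rw [Fin.lt_def, hσa', hσval]
      rw [show (if σ a' < σ q then k - 1 else 0)
          = if B < cvF B k ((pi (epF q) : Fin N) : ℕ) then k - 1 else 0 from by
        simp only [hcond]]
      set v := ((pi (epF q) : Fin N) : ℕ) with hv
      have hvN : v < N := (pi (epF q)).isLt
      have hcase : v < B ∨ B + k ≤ v := by omega
      rcases hcase with hc | hc
      · rw [show cvF B k v = v from by unfold cvF; rw [if_pos hc], if_neg (by omega)]
        omega
      · rw [show cvF B k v = v - (k - 1) from by
          unfold cvF; rw [if_neg (by omega), if_neg (by omega)], if_pos (by omega)]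
        omega

/-- The permutations all of whose simple patterns lie in `C`. -/
def DD (C : Set Permutation) : Set Permutation :=
  {x | ∀ t : Permutation, IsSimple t.2 → PermLe t x → t ∈ C}

lemma subset_substClosure (C : Set Permutation) : C ⊆ substClosure C :=
  fun _ hx => Set.mem_sInter.mpr fun _ hD => hD.2.2 hx

lemma substClosure_isClass (C : Set Permutation) : IsPermClass (substClosure C) :=
  fun a b hab hb =>
    Set.mem_sInter.mpr fun D hD => hD.1 a b hab (Set.mem_sInter.mp hb D hD)

lemma substClosure_closed (C : Set Permutation) : SubstClosed (substClosure C) := by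
  rintro x ⟨m, σ, n, α, hσ, hn, hα, hxe⟩
  refine Set.mem_sInter.mpr fun D hD => ?_
  exact hD.2.1 ⟨m, σ, n, α, Set.mem_sInter.mp hσ D hD, hn,
    fun i => Set.mem_sInter.mp (hα i) D hD, hxe⟩

lemma substClosure_min {C D : Set Permutation} (h1 : IsPermClass D) (h2 : SubstClosed D)
    (h3 : C ⊆ D) : substClosure C ⊆ D :=
  fun _ hx => Set.mem_sInter.mp hx D ⟨h1, h2, h3⟩

lemma DD_isClass (C : Set Permutation) : IsPermClass (DD C) :=
  fun a b hab hb t ht hta => hb t ht (permLe_trans hta hab)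

lemma C_subset_DD {C : Set Permutation} (hC : IsPermClass C) : C ⊆ DD C :=
  fun x hx t _ htx => hC t x htx hx

lemma DD_closed (C : Set Permutation) : SubstClosed (DD C) := by
  rintro x ⟨m, σ, n, α, hσ, hn, hα, rfl⟩
  intro t ht htx
  rcases simple_le_inflation ht α htx with h | ⟨i, h⟩
  · exact hσ t ht h
  · exact hα i t ht h

lemma substClosure_subset_DD {C : Set Permutation} (hC : IsPermClass C) :
    substClosure C ⊆ DD C :=
  substClosure_min (DD_isClass C) (DD_closed C) (C_subset_DD hC)

lemma DD_subset_substClosure {C : Set Permutation} (hC : IsPermClass C)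
    (hne : ∃ x ∈ C, 0 < x.1) : DD C ⊆ substClosure C := by
  obtain ⟨x0, hx0, hx0p⟩ := hne
  have honemem : onePerm ∈ C := hC onePerm x0 (one_le hx0p) hx0
  suffices h : ∀ (N : ℕ) (pi : PermOf N), (⟨N, pi⟩ : Permutation) ∈ DD C →
      (⟨N, pi⟩ : Permutation) ∈ substClosure C by
    intro x hx; exact h x.1 x.2 hx
  intro N
  induction N using Nat.strong_induction_on with
  | _ N IH =>
    intro pi hpi
    by_cases h0 : N = 0
    · subst h0
      exact Set.mem_sInter.mpr fun D hD => hD.1 ⟨0, pi⟩ x0 (zero_le x0 pi) (hD.2.2 hx0)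
    by_cases h1 : N = 1
    · subst h1
      have hpe : (⟨1, pi⟩ : Permutation) = onePerm := by
        have : pi = (Equiv.refl (Fin 1)) := Subsingleton.elim _ _
        rw [this]; rfl
      rw [hpe]
      exact subset_substClosure C honemem
    have hN2 : 2 ≤ N := by omega
    by_cases hsimp : IsSimple pi
    · exact subset_substClosure C (hpi ⟨N, pi⟩ hsimp (permLe_refl _))
    · have hex : ∃ s : Set (Fin N), IsPermInterval pi s ∧ 2 ≤ s.ncard ∧ s ≠ Set.univ := by
        by_contra hcon
        push_neg at hcon
        refine hsimp ⟨hN2, fun s hs => ?_⟩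
        by_cases hc1 : s.ncard ≤ 1
        · exact Or.inl hc1
        · exact Or.inr (hcon s hs (by omega))
      obtain ⟨s, hs, hc2, hcu⟩ := hex
      obtain ⟨m, σ, n, α, hmN, hnpos, hnlt, hskel, hblock, heq⟩ :=
        exists_decomp pi s hs hc2 hcu
      rw [heq]
      apply substClosure_closed C
      refine ⟨m, σ, n, α, ?_, hnpos, ?_, rfl⟩
      · exact IH m hmN σ (DD_isClass C ⟨m, σ⟩ ⟨N, pi⟩ hskel hpi)
      · exact fun i => IH (n i) (hnlt i) (α i) (DD_isClass C ⟨n i, α i⟩ ⟨N, pi⟩ (hblock i) hpi)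

end BasisAux

/-- The basis of the substitution closure of a nonempty class `C` consists of the
containment-minimal simple permutations not in `C`. -/
theorem basis_of_substClosure
    (C : Set Permutation) (hC : IsPermClass C) (hne : ∃ π ∈ C, 0 < π.1) :
    basisOf (substClosure C) =
      {π : Permutation | IsSimple π.2 ∧ π ∉ C ∧
        ∀ σ : Permutation, IsSimple σ.2 → σ ∉ C → PermLe σ π → σ = π} := by
  have hDD : substClosure C = BasisAux.DD C :=
    Set.eq_of_subset_of_subset (BasisAux.substClosure_subset_DD hC)
      (BasisAux.DD_subset_substClosure hC hne)
  ext x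
  simp only [basisOf, Set.mem_setOf_eq]
  constructor
  · rintro ⟨hnx, hmin⟩
    have hx' : ¬ ∀ t : Permutation, IsSimple t.2 → PermLe t x → t ∈ C := by
      intro hc; exact hnx (hDD ▸ (hc : x ∈ BasisAux.DD C))
    push_neg at hx'
    obtain ⟨t, ht, htx, htc⟩ := hx'
    have hteq : t = x := by
      by_contra hne'
      have hmem : t ∈ substClosure C := hmin t htx hne'
      exact htc ((hDD ▸ hmem) t ht (BasisAux.permLe_refl t))
    subst hteq
    refine ⟨ht, htc, fun u hu huc hux => ?_⟩
    by_contra hne'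
    have hmem : u ∈ substClosure C := hmin u hux hne'
    exact huc ((hDD ▸ hmem) u hu (BasisAux.permLe_refl u))
  · rintro ⟨hsx, hxc, hmin⟩
    constructor
    · intro hx
      exact hxc ((hDD ▸ hx) x hsx (BasisAux.permLe_refl x))
    · intro u hux hne'
      rw [hDD]
      intro t ht htx
      by_contra htc
      have hteq : t = x := hmin t ht htc (BasisAux.permLe_trans htx hux)
      have hlen1 : u.1 < x.1 := by
        rcases lt_or_eq_of_le (BasisAux.permLe_len hux) with h | h
        · exact h
        · exact absurd (BasisAux.permLe_eq hux h.ge) hne'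
      have hlen2 : x.1 ≤ u.1 := hteq ▸ BasisAux.permLe_len htx
      omega
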